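/- Let N ∈ SL(2,ℤ) with Tr(N) = θ ≥ 3, and suppose N has a real eigenvalue α > 1 with eigenvector a ∈ ℝ² \ {0}, and let δ := det(I₂ − N) = 2 − θ. If k ∈ δℤ², then k (I₂−N)⁻¹ (n₁₁n₁₂ − k₂, n₂₁n₂₂ + k₁)ᵗ + k₁k₂ ∈ 2ℤ. -/

import Mathlib

open Matrix

theorem stmt9 (N : Matrix (Fin 2) (Fin 2) ℤ) (θ : ℤ) (hθ : 3 ≤ θ)
    (hdet : N.det = 1) (htr : N.trace = θ)
    (α : ℝ) (hα : 1 < α) (a : Fin 2 → ℝ) (ha : a ≠ 0)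
    (heig : (N.map (Int.cast : ℤ → ℝ)).mulVec a = α • a)
    (k : Fin 2 → ℤ) (hk : ∃ l : Fin 2 → ℤ, k = (2 - θ) • l) :
    ∃ m : ℤ,
      (fun i => (k i : ℚ)) ⬝ᵥ
          ((1 - N.map (Int.cast : ℤ → ℚ))⁻¹.mulVec
            ![((N 0 0 * N 0 1 - k 1 : ℤ) : ℚ), ((N 1 0 * N 1 1 + k 0 : ℤ) : ℚ)])
        + ((k 0 * k 1 : ℤ) : ℚ) = 2 * (m : ℚ) := by
  obtain ⟨l, hl⟩ := hk
  set A := N 0 0 with hA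
  set B := N 0 1 with hB
  set C := N 1 0 with hC
  set D := N 1 1 with hD
  have hdet2 : A * D - B * C = 1 := by
    rw [Matrix.det_fin_two] at hdet; exact hdet
  have htr2 : A + D = θ := by
    simpa [Matrix.trace_fin_two] using htr
  have hk0 : k 0 = (2 - θ) * l 0 := by rw [hl]; rfl
  have hk1 : k 1 = (2 - θ) * l 1 := by rw [hl]; rfl
  set δ : ℤ := 2 - θ with hδ
  -- the integer value of the expression
  set S : ℤ := (l 0 * (1-D) + l 1 * C) * (A*B - δ * l 1)
      + (l 0 * B + l 1 * (1-A)) * (C*D + δ * l 0) + δ^2 * l 0 * l 1 with hS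
  have hEven : Even S := by
    have h2 : ((A : ZMod 2) * D - B * C = 1) := by
      exact_mod_cast congrArg (Int.cast : ℤ → ZMod 2) hdet2
    have : ((S : ZMod 2)) = 0 := by
      push_cast [hS, hδ]
      have hθ2 : (θ : ZMod 2) = (A : ZMod 2) + D := by exact_mod_cast (congrArg (Int.cast : ℤ → ZMod 2) htr2).symm
      rw [hθ2]
      revert h2
      generalize (A : ZMod 2) = x
      generalize (B : ZMod 2) = y
      generalize (C : ZMod 2) = z
      generalize (D : ZMod 2) = w
      generalize (l 0 : ZMod 2) = u
      generalize (l 1 : ZMod 2) = v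
      revert x y z w u v
      decide
    obtain ⟨m, hm⟩ := (ZMod.intCast_zmod_eq_zero_iff_dvd S 2).mp this
    exact ⟨m, by omega⟩
  obtain ⟨m, hm⟩ := hEven
  refine ⟨m, ?_⟩
  -- compute the matrix
  have hδQ : ((δ : ℚ)) ≠ 0 := by
    have : δ ≤ -1 := by omega
    intro h; exact_mod_cast absurd (by exact_mod_cast h : δ = 0) (by omega)
  have hM : (1 - N.map (Int.cast : ℤ → ℚ)) = !![1 - (A:ℚ), -(B:ℚ); -(C:ℚ), 1 - (D:ℚ)] := by
    ext i j
    fin_cases i <;> fin_cases j <;>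
      simp [Matrix.map_apply, Matrix.one_apply, ← hA, ← hB, ← hC, ← hD]
  rw [hM]
  have hMdet : (!![1 - (A:ℚ), -(B:ℚ); -(C:ℚ), 1 - (D:ℚ)]).det = (δ : ℚ) := by
    simp [Matrix.det_fin_two_of]
    push_cast [hδ, ← htr2]
    have : (A:ℚ) * D - B * C = 1 := by exact_mod_cast hdet2
    linarith
  have hinv : (!![1 - (A:ℚ), -(B:ℚ); -(C:ℚ), 1 - (D:ℚ)])⁻¹
      = (δ : ℚ)⁻¹ • !![1 - (D:ℚ), (B:ℚ); (C:ℚ), 1 - (A:ℚ)] := by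
    rw [Matrix.inv_def, hMdet, Matrix.adjugate_fin_two]
    simp only [Ring.inverse_eq_inv']
    congr 1
    ext i j
    fin_cases i <;> fin_cases j <;> simp <;> ring
  rw [hinv]
  have goal_eq : (fun i => (k i : ℚ)) ⬝ᵥ
      (((δ : ℚ)⁻¹ • !![1 - (D:ℚ), (B:ℚ); (C:ℚ), 1 - (A:ℚ)]).mulVec
        ![((A * B - k 1 : ℤ) : ℚ), ((C * D + k 0 : ℤ) : ℚ)])
      + ((k 0 * k 1 : ℤ) : ℚ) = (S : ℚ) := by
    simp only [Matrix.mulVec, dotProduct, Fin.sum_univ_two, Matrix.smul_apply,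
      Matrix.cons_val', Matrix.cons_val_zero, Matrix.cons_val_one, Matrix.head_cons,
      Matrix.head_fin_const, Matrix.empty_val', Matrix.cons_val_fin_one, smul_eq_mul, Matrix.of_apply]
    push_cast [hS, hk0, hk1]
    field_simp
    ring
  rw [goal_eq, hm]
  push_cast
  ring
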